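/- Let k be an even integer, f, g, h : ℂ → ℂ, b ∈ ℂ, and f₀, g₀ ∈ ℂ. Suppose that, as s → k with s ≠ k, f(s) → f₀, g(s) → g₀, and (s − k)·h(s) → b, and that f(s) − g(s) = (1 − exp(−iπs))·(f(s) − h(s)) for all s ≠ k in some punctured neighborhood of k. Then f₀ − g₀ = −iπ·b; in particular f₀ = g₀ if and only if b = 0. -/

import Mathlib

open Complex Filter Real

/-- Let `k` be an even integer, `f, g, h : ℂ → ℂ`, `b ∈ ℂ`, `f₀, g₀ ∈ ℂ`.
If, as `s → k`, `s ≠ k`, `f(s) → f₀`, `g(s) → g₀`, `(s − k)·h(s) → b`, and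
`f(s) − g(s) = (1 − exp(−iπs))·(f(s) − h(s))` on a punctured neighborhood of `k`, then
`f₀ − g₀ = −iπ·b`; in particular `f₀ = g₀` if and only if `b = 0`. -/
theorem zeta_values_diff_eq_neg_i_pi_residue
    (k : ℤ) (hk : Even k) (f g h : ℂ → ℂ) (b f₀ g₀ : ℂ)
    (hf : Tendsto f (nhdsWithin (k : ℂ) {(k : ℂ)}ᶜ) (nhds f₀))
    (hg : Tendsto g (nhdsWithin (k : ℂ) {(k : ℂ)}ᶜ) (nhds g₀))
    (hh : Tendsto (fun s : ℂ => (s - (k : ℂ)) * h s) (nhdsWithin (k : ℂ) {(k : ℂ)}ᶜ) (nhds b))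
    (hid : ∀ᶠ s in nhdsWithin (k : ℂ) {(k : ℂ)}ᶜ,
      f s - g s = (1 - Complex.exp (-(Complex.I * (π : ℂ) * s))) * (f s - h s)) :
    f₀ - g₀ = -(Complex.I * (π : ℂ)) * b ∧ (f₀ = g₀ ↔ b = 0) := by
  set u : ℂ → ℂ := fun s => 1 - Complex.exp (-(Complex.I * (π : ℂ) * s)) with hu
  -- u(k) = 0 for even k
  have huk : u (k : ℂ) = 0 := by
    obtain ⟨m, hm⟩ := hk
    have : -(Complex.I * (π : ℂ) * (k : ℂ)) = ((-m : ℤ) : ℂ) * (2 * ↑π * Complex.I) := by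
      push_cast [hm]; ring
    simp only [hu]
    rw [this, Complex.exp_int_mul_two_pi_mul_I, sub_self]
  -- derivative of u at k is I*π
  have hderiv : HasDerivAt u (Complex.I * (π : ℂ)) (k : ℂ) := by
    have h1 : HasDerivAt (fun s : ℂ => -(Complex.I * (π : ℂ) * s)) (-(Complex.I * (π : ℂ)))
        (k : ℂ) := by
      exact (((hasDerivAt_id (k : ℂ)).const_mul (Complex.I * (π : ℂ))).neg).congr_deriv (by ring)
    have h2 := h1.cexp
    have h3 := (hasDerivAt_const (k : ℂ) (1 : ℂ)).sub h2
    have : Complex.exp (-(Complex.I * ↑π * ↑k)) = 1 := by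
      have := huk; simp [hu] at this; linear_combination -this
    exact h3.congr_deriv (by rw [this]; ring)
  -- slope tendsto
  have hslope : Tendsto (fun s : ℂ => u s / (s - (k : ℂ)))
      (nhdsWithin (k : ℂ) {(k : ℂ)}ᶜ) (nhds (Complex.I * (π : ℂ))) := by
    have := hasDerivAt_iff_tendsto_slope.mp hderiv
    refine this.congr' ?_
    filter_upwards [self_mem_nhdsWithin] with s hs
    simp [slope_def_field, huk, div_eq_iff (sub_ne_zero.mpr (by simpa using hs))]
  have hzero : Tendsto (fun s : ℂ => (s - (k : ℂ)) * f s)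
      (nhdsWithin (k : ℂ) {(k : ℂ)}ᶜ) (nhds 0) := by
    have h1 : Tendsto (fun s : ℂ => s - (k : ℂ)) (nhdsWithin (k : ℂ) {(k : ℂ)}ᶜ) (nhds 0) := by
      have := (tendsto_id.sub tendsto_const_nhds :
        Tendsto (fun s : ℂ => s - (k : ℂ)) (nhds (k : ℂ)) (nhds ((k : ℂ) - k)))
      simpa using this.mono_left nhdsWithin_le_nhds
    simpa using h1.mul hf
  have hmain : Tendsto (fun s => f s - g s) (nhdsWithin (k : ℂ) {(k : ℂ)}ᶜ)
      (nhds (Complex.I * (π : ℂ) * (0 - b))) := by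
    have hprod := hslope.mul (hzero.sub hh)
    refine hprod.congr' ?_
    filter_upwards [hid, self_mem_nhdsWithin] with s hs hsne
    have hne : s - (k : ℂ) ≠ 0 := sub_ne_zero.mpr (by simpa using hsne)
    field_simp [hs, hu]
    simp only [hs, hu]
  have hlim : Tendsto (fun s => f s - g s) (nhdsWithin (k : ℂ) {(k : ℂ)}ᶜ) (nhds (f₀ - g₀)) :=
    hf.sub hg
  have heq : f₀ - g₀ = Complex.I * (π : ℂ) * (0 - b) := tendsto_nhds_unique hlim hmain
  have heq' : f₀ - g₀ = -(Complex.I * (π : ℂ)) * b := by rw [heq]; ring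
  refine ⟨heq', ?_⟩
  constructor
  · intro hfg
    have : -(Complex.I * (π : ℂ)) * b = 0 := by rw [← heq', hfg, sub_self]
    have hπ : (π : ℂ) ≠ 0 := by
      exact_mod_cast Real.pi_ne_zero
    simpa [Complex.I_ne_zero, hπ] using this
  · intro hb
    have : f₀ - g₀ = 0 := by rw [heq', hb, mul_zero]
    exact sub_eq_zero.mp this
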